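/- Let H be a torsion-free abelian group, G a subgroup of H, a ∈ H, and n ≥ 1 an integer with n·a ∈ G. Suppose H is generated as a group by G ∪ {a}. Let q be an integer coprime to n. Then for every x ∈ H we have n·x ∈ G, and x is divisible by q in H (i.e., there is y ∈ H with q·y = x) if and only if n·x is divisible by q within G (i.e., there is h ∈ G with q·h = n·x). -/

import Mathlib

/-- Let `H` be a torsion-free abelian group, `G` a subgroup, `a ∈ H`, `n ≥ 1`
with `n • a ∈ G`, and suppose `H` is generated by `G ∪ {a}`. Let `q` be an integer
coprime to `n`. Then for every `x ∈ H`, `n • x ∈ G`, and `q` divides `x` in `H`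
iff `q` divides `n • x` within `G`. -/
theorem stmt5 {H : Type*} [AddCommGroup H] [NoZeroSMulDivisors ℤ H]
    (G : AddSubgroup H) (a : H) (n : ℕ) (hn : 1 ≤ n) (hna : n • a ∈ G)
    (hgen : AddSubgroup.closure (↑G ∪ {a}) = ⊤)
    (q : ℤ) (hq : IsCoprime q (n : ℤ)) (x : H) :
    n • x ∈ G ∧ ((∃ y : H, q • y = x) ↔ ∃ h ∈ G, q • h = n • x) := by
  have key : ∀ z : H, n • z ∈ G := by
    intro z
    have hz : z ∈ AddSubgroup.closure ((↑G : Set H) ∪ {a}) := by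
      rw [hgen]; trivial
    induction hz using AddSubgroup.closure_induction with
    | mem w hw =>
        rcases hw with hw | hw
        · exact G.nsmul_mem hw n
        · simp only [Set.mem_singleton_iff] at hw; subst hw; exact hna
    | zero => simpa using G.zero_mem
    | add u v _ _ hu hv => rw [smul_add]; exact G.add_mem hu hv
    | neg u _ hu => rw [smul_neg]; exact G.neg_mem hu
  refine ⟨key x, ?_, ?_⟩
  · rintro ⟨y, rfl⟩
    exact ⟨n • y, key y, by rw [smul_comm]⟩
  · rintro ⟨h, hh, hqh⟩
    obtain ⟨r, s, hrs⟩ := hq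
    refine ⟨r • x + s • h, ?_⟩
    have : (q * r + s * (n : ℤ)) • x = x := by
      rw [show q * r + s * (n:ℤ) = r * q + s * n by ring, hrs, one_smul]
    calc q • (r • x + s • h) = (q * r) • x + s • (q • h) := by
          rw [smul_add, smul_smul, smul_comm]
      _ = (q * r) • x + (s * (n:ℤ)) • x := by
          rw [hqh, ← natCast_zsmul, smul_smul]
      _ = x := by rw [← add_smul, this]
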